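/- For r > 0, the function H_r satisfies the quasi-periodicity H_r(z + 2ir) = H_r(z) - 2i for all z in its domain. -/

import Mathlib

open Filter Finset Complex


/-- `H_r(z + 2ir) = H_r(z) - 2i`, where `H_r` is the symmetric limit
`lim_{N→∞} Σ_{k=-N}^N (1/i)(e^{2kr}+e^{iz})/(e^{2kr}-e^{iz})`. -/
theorem annulus_H_quasiperiodic (r : ℝ) (hr : 0 < r) (z : ℂ) (L : ℂ)
    (h : Filter.Tendsto (fun N : ℕ => ∑ k ∈ Finset.Icc (-(N : ℤ)) (N : ℤ),
        (1 / Complex.I) * (Complex.exp (2 * k * r) + Complex.exp (Complex.I * z)) /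
          (Complex.exp (2 * k * r) - Complex.exp (Complex.I * z)))
      Filter.atTop (nhds L)) :
    Filter.Tendsto (fun N : ℕ => ∑ k ∈ Finset.Icc (-(N : ℤ)) (N : ℤ),
        (1 / Complex.I) * (Complex.exp (2 * k * r) +
            Complex.exp (Complex.I * (z + 2 * Complex.I * r))) /
          (Complex.exp (2 * k * r) - Complex.exp (Complex.I * (z + 2 * Complex.I * r))))
      Filter.atTop (nhds (L - 2 * Complex.I)) := by
  set w : ℂ := Complex.exp (Complex.I * z) with hw
  have hw0 : w ≠ 0 := Complex.exp_ne_zero _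
  set f : ℤ → ℂ := fun j => (1 / Complex.I) * (Complex.exp (2 * j * r) + w) /
      (Complex.exp (2 * j * r) - w) with hf
  -- each shifted term is f (k+1)
  have hterm : ∀ k : ℤ, (1 / Complex.I) * (Complex.exp (2 * k * r) +
        Complex.exp (Complex.I * (z + 2 * Complex.I * r))) /
        (Complex.exp (2 * k * r) - Complex.exp (Complex.I * (z + 2 * Complex.I * r)))
      = f (k + 1) := by
    intro k
    have h1 : Complex.exp (Complex.I * (z + 2 * Complex.I * r)) = w * Complex.exp (-(2*r)) := by
      rw [hw, ← Complex.exp_add]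
      congr 1
      have : Complex.I * Complex.I = -1 := Complex.I_mul_I
      ring_nf
      rw [Complex.I_sq]
      ring
    have he : Complex.exp (2*(r:ℂ)) ≠ 0 := Complex.exp_ne_zero _
    have h2 : Complex.exp (2 * ((k:ℂ)+1) * r) = Complex.exp (2*r) * Complex.exp (2*k*r) := by
      rw [← Complex.exp_add]; ring_nf
    have h3 : Complex.exp (2*(r:ℂ)) * Complex.exp (-(2*(r:ℂ))) = 1 := by
      rw [← Complex.exp_add]; simp
    rw [h1, hf]
    simp only
    push_cast
    rw [h2, mul_div_assoc, mul_div_assoc]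
    congr 1
    rw [show Complex.exp (2*(r:ℂ)) * Complex.exp (2*(k:ℂ)*r) + w
          = Complex.exp (2*(r:ℂ)) * (Complex.exp (2*(k:ℂ)*r) + w * Complex.exp (-(2*(r:ℂ)))) by
        rw [mul_add]; rw [show Complex.exp (2*(r:ℂ)) * (w * Complex.exp (-(2*(r:ℂ))))
          = w * (Complex.exp (2*(r:ℂ)) * Complex.exp (-(2*(r:ℂ)))) by ring, h3, mul_one],
      show Complex.exp (2*(r:ℂ)) * Complex.exp (2*(k:ℂ)*r) - w
          = Complex.exp (2*(r:ℂ)) * (Complex.exp (2*(k:ℂ)*r) - w * Complex.exp (-(2*(r:ℂ)))) by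
        rw [mul_sub]; rw [show Complex.exp (2*(r:ℂ)) * (w * Complex.exp (-(2*(r:ℂ))))
          = w * (Complex.exp (2*(r:ℂ)) * Complex.exp (-(2*(r:ℂ)))) by ring, h3, mul_one]]
    exact (mul_div_mul_left _ _ he).symm
  -- rewrite the new sums
  have hsum : ∀ N : ℕ, (∑ k ∈ Finset.Icc (-(N : ℤ)) (N : ℤ),
        (1 / Complex.I) * (Complex.exp (2 * k * r) +
            Complex.exp (Complex.I * (z + 2 * Complex.I * r))) /
          (Complex.exp (2 * k * r) - Complex.exp (Complex.I * (z + 2 * Complex.I * r))))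
      = (∑ k ∈ Finset.Icc (-(N : ℤ)) (N : ℤ), f k) - f (-(N:ℤ)) + f ((N:ℤ)+1) := by
    intro N
    have e1 : (∑ k ∈ Finset.Icc (-(N : ℤ)) (N : ℤ),
        (1 / Complex.I) * (Complex.exp (2 * k * r) +
            Complex.exp (Complex.I * (z + 2 * Complex.I * r))) /
          (Complex.exp (2 * k * r) - Complex.exp (Complex.I * (z + 2 * Complex.I * r))))
        = ∑ k ∈ Finset.Icc (-(N : ℤ)) (N : ℤ), f (k + 1) :=
      Finset.sum_congr rfl fun k _ => hterm k
    have e2 : (∑ k ∈ Finset.Icc (-(N : ℤ)) (N : ℤ), f (k + 1))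
        = ∑ k ∈ Finset.Icc (-(N : ℤ) + 1) ((N : ℤ) + 1), f k := by
      rw [← Finset.map_add_right_Icc, Finset.sum_map]
      rfl
    have e3 : Finset.Icc (-(N : ℤ) + 1) ((N : ℤ) + 1)
        = insert ((N:ℤ)+1) (Finset.Icc (-(N : ℤ) + 1) (N : ℤ)) := by
      ext x; simp only [Finset.mem_Icc, Finset.mem_insert]; omega
    have e4 : Finset.Icc (-(N : ℤ)) (N : ℤ)
        = insert (-(N:ℤ)) (Finset.Icc (-(N : ℤ) + 1) (N : ℤ)) := by
      ext x; simp only [Finset.mem_Icc, Finset.mem_insert]; omega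
    have n3 : ((N:ℤ)+1) ∉ Finset.Icc (-(N : ℤ) + 1) (N : ℤ) := by
      simp only [Finset.mem_Icc]; omega
    have n4 : (-(N:ℤ)) ∉ Finset.Icc (-(N : ℤ) + 1) (N : ℤ) := by
      simp only [Finset.mem_Icc]; omega
    rw [e1, e2, e3, Finset.sum_insert n3, e4, Finset.sum_insert n4]
    ring
  -- limits of the boundary terms
  have hA : Tendsto (fun N : ℕ => Complex.exp (2 * ((-(N:ℤ)):ℂ) * r)) atTop (nhds 0) := by
    have : ∀ N : ℕ, Complex.exp (2 * ((-(N:ℤ)):ℂ) * r) = ((Real.exp (2 * (-(N:ℝ)) * r) : ℝ) : ℂ) := by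
      intro N; rw [Complex.ofReal_exp]; push_cast; ring_nf
    simp only [this]
    rw [show ((0:ℂ)) = ((0:ℝ):ℂ) by norm_num]
    apply Tendsto.comp (Complex.continuous_ofReal.tendsto 0)
    apply Real.tendsto_exp_atBot.comp
    apply Tendsto.atBot_mul_const hr
    apply Tendsto.const_mul_atBot two_pos
    exact tendsto_neg_atBot_iff.mpr tendsto_natCast_atTop_atTop
  have hB : Tendsto (fun N : ℕ => Complex.exp (-(2 * (((N:ℤ)+1):ℂ) * r))) atTop (nhds 0) := by
    have : ∀ N : ℕ, Complex.exp (-(2 * (((N:ℤ)+1):ℂ) * r)) = ((Real.exp (-(2 * ((N:ℝ)+1) * r)) : ℝ) : ℂ) := by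
      intro N; rw [Complex.ofReal_exp]; push_cast; ring_nf
    simp only [this]
    rw [show ((0:ℂ)) = ((0:ℝ):ℂ) by norm_num]
    apply Tendsto.comp (Complex.continuous_ofReal.tendsto 0)
    apply Real.tendsto_exp_atBot.comp
    apply tendsto_neg_atBot_iff.mpr
    apply Tendsto.atTop_mul_const hr
    apply Tendsto.const_mul_atTop two_pos
    exact tendsto_atTop_add_const_right _ 1 tendsto_natCast_atTop_atTop
  -- f(-N) → I
  have hfneg : Tendsto (fun N : ℕ => f (-(N:ℤ))) atTop (nhds Complex.I) := by
    have hcont : ContinuousAt (fun t : ℂ => (1 / Complex.I) * (t + w) / (t - w)) 0 := by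
      apply ContinuousAt.div
      · fun_prop
      · fun_prop
      · simpa using hw0
    have hval : 1 / Complex.I * (0 + w) / (0 - w) = Complex.I := by
      rw [zero_add, zero_sub, div_neg, mul_div_assoc, div_self hw0, mul_one]
      simp [Complex.inv_I]
    have := (hcont.tendsto.comp hA)
    rw [hval] at this
    apply this.congr
    intro N
    simp only [Function.comp_apply, hf]
    push_cast
    ring_nf
  -- f(N+1) → -I
  have hrepr : ∀ j : ℤ, f j = (1 / Complex.I) * (1 + w * Complex.exp (-(2 * (j:ℂ) * r))) /
      (1 - w * Complex.exp (-(2 * (j:ℂ) * r))) := by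
    intro j
    have h3 : Complex.exp (-(2 * (j:ℂ) * r)) * Complex.exp (2 * (j:ℂ) * r) = 1 := by
      rw [← Complex.exp_add]; simp
    have hc : Complex.exp (-(2 * (j:ℂ) * r)) ≠ 0 := Complex.exp_ne_zero _
    rw [hf]
    simp only
    rw [mul_div_assoc, mul_div_assoc]
    congr 1
    rw [show (1:ℂ) + w * Complex.exp (-(2 * (j:ℂ) * r))
          = Complex.exp (-(2 * (j:ℂ) * r)) * (Complex.exp (2 * (j:ℂ) * r) + w) by
        rw [mul_add, h3]; ring,
      show (1:ℂ) - w * Complex.exp (-(2 * (j:ℂ) * r))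
          = Complex.exp (-(2 * (j:ℂ) * r)) * (Complex.exp (2 * (j:ℂ) * r) - w) by
        rw [mul_sub, h3]; ring]
    exact (mul_div_mul_left _ _ hc).symm
  have hfpos : Tendsto (fun N : ℕ => f ((N:ℤ)+1)) atTop (nhds (-Complex.I)) := by
    have hcont : ContinuousAt (fun s : ℂ => (1 / Complex.I) * (1 + w * s) / (1 - w * s)) 0 := by
      apply ContinuousAt.div
      · fun_prop
      · fun_prop
      · simp
    have hval : 1 / Complex.I * (1 + w * 0) / (1 - w * 0) = -Complex.I := by
      simp [Complex.inv_I]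
    have := (hcont.tendsto.comp hB)
    rw [hval] at this
    apply this.congr
    intro N
    simp only [Function.comp_apply]
    rw [hrepr]
    push_cast
    ring_nf
  -- combine
  have hcomb := (h.sub hfneg).add hfpos
  have : L - Complex.I + -Complex.I = L - 2 * Complex.I := by ring
  rw [this] at hcomb
  convert hcomb using 2 with N
  rw [hsum]
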